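/- Let E be a group, and g ∈ E an element of infinite order such that the cyclic subgroup ⟨g⟩ has finite index in E, and such that for every f ∈ E there exists n > 0 with f⁻¹ gⁿ f = gⁿ. Then the center Z(E) has finite index in E. -/

import Mathlib

/-- If `g ∈ E` has infinite order, `⟨g⟩` has finite index in `E`, and every
element of `E` commutes with some positive power of `g`, then the center of `E`
has finite index. -/
theorem center_finiteIndex {E : Type*} [Group E] (g : E)
    (hg : ¬ IsOfFinOrder g) (hfi : (Subgroup.zpowers g).FiniteIndex)
    (hconj : ∀ f : E, ∃ n : ℕ, 0 < n ∧ f⁻¹ * g ^ n * f = g ^ n) :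
    (Subgroup.center E).FiniteIndex := by
  classical
  haveI := hfi
  haveI : Finite (E ⧸ Subgroup.zpowers g) :=
    Subgroup.finite_quotient_of_finiteIndex
  haveI : Fintype (E ⧸ Subgroup.zpowers g) := Fintype.ofFinite _
  -- choose exponent for each coset representative
  choose n hn hcomm using hconj
  set Q := E ⧸ Subgroup.zpowers g
  set N : ℕ := ∏ q : Q, n (Quotient.out q) with hN
  have hNpos : 0 < N := Finset.prod_pos (fun q _ => hn _)
  -- g ^ N is central
  have hcentral : g ^ N ∈ Subgroup.center E := by
    rw [Subgroup.mem_center_iff]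
    intro x
    set q : Q := QuotientGroup.mk x
    set r : E := Quotient.out q
    have hr : (r : E)⁻¹ * x ∈ Subgroup.zpowers g := by
      have : QuotientGroup.mk r = QuotientGroup.mk x := Quotient.out_eq' q
      rwa [QuotientGroup.eq] at this
    obtain ⟨k, hk⟩ := hr
    -- r commutes with g ^ N
    have hrn : Commute r (g ^ n r) := by
      show r * g ^ n r = g ^ n r * r
      conv_lhs => rw [← hcomm r]
      group
    have hdvd : n r ∣ N := Finset.dvd_prod_of_mem (fun q => n (Quotient.out q))
      (Finset.mem_univ q)
    obtain ⟨m, hm⟩ := hdvd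
    have hrN : Commute r (g ^ N) := by
      rw [hm, pow_mul]
      exact hrn.pow_right m
    have hxr : x = r * g ^ k := by
      simp only at hk
      rw [hk]; group
    have hgk : Commute (g ^ k) (g ^ N) := ((Commute.refl g).pow_right N).zpow_left k
    rw [hxr]
    exact (hrN.mul_left hgk).eq
  -- ⟨g^N⟩ ≤ center
  have hle : Subgroup.zpowers (g ^ N) ≤ Subgroup.center E :=
    Subgroup.zpowers_le.mpr hcentral
  -- ⟨g^N⟩ has finite index
  have hinj : Function.Injective (zpowersHom E g) := by
    rw [← injective_zpow_iff_not_isOfFinOrder] at hg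
    intro a b hab
    exact hg hab
  have hmap : Subgroup.map (zpowersHom E g)
      (Subgroup.zpowers (Multiplicative.ofAdd (N : ℤ))) = Subgroup.zpowers (g ^ N) := by
    rw [MonoidHom.map_zpowers]
    congr 1
    simp [zpowersHom_apply]
  have hidx : (Subgroup.zpowers (g ^ N)).index
      = (Subgroup.zpowers (Multiplicative.ofAdd (N : ℤ))).index * (Subgroup.zpowers g).index := by
    rw [← hmap, Subgroup.index_map_of_injective _ hinj, Subgroup.range_zpowersHom]
  have hzidx : (Subgroup.zpowers (Multiplicative.ofAdd (N : ℤ))).index = N := by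
    have : Subgroup.zpowers (Multiplicative.ofAdd (N : ℤ))
        = AddSubgroup.toSubgroup (AddSubgroup.zmultiples (N : ℤ)) := by
      ext x
      simp only [Subgroup.mem_zpowers_iff, AddSubgroup.toSubgroup,
        AddSubgroup.mem_zmultiples_iff]
      constructor
      · rintro ⟨k, rfl⟩
        exact ⟨k, by simp [← ofAdd_zsmul, smul_eq_mul, mul_comm]⟩
      · rintro ⟨k, hk⟩
        refine ⟨k, ?_⟩
        simp only at hk
        rw [← ofAdd_toAdd x, ← hk, ofAdd_zsmul]
    rw [this, AddSubgroup.index_toSubgroup, Int.index_zmultiples, Int.natAbs_natCast]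
  haveI : (Subgroup.zpowers (g ^ N)).FiniteIndex := by
    constructor
    rw [hidx, hzidx]
    exact Nat.mul_ne_zero hNpos.ne' hfi.index_ne_zero
  exact Subgroup.finiteIndex_of_le hle
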